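/- Let K be a kernel of an idempotent semifield S. If aⁿ ∈ K for some n ∈ ℕ, n ≥ 1, then a ∈ K. -/

import Mathlib

/-- An idempotent semifield structure on a multiplicative abelian group `S`:
a commutative, associative, idempotent addition over which multiplication
distributes. The induced order is `a ≤ b ↔ a + b = b`. -/
structure IdemSemifieldStr (S : Type*) [CommGroup S] where
  add : S → S → S
  add_comm : ∀ a b, add a b = add b a
  add_assoc : ∀ a b c, add (add a b) c = add a (add b c)
  add_idem : ∀ a, add a a = a
  mul_dist : ∀ g a b, g * add a b = add (g * a) (g * b)

namespace IdemSemifieldStr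

variable {S : Type*} [CommGroup S] (A : IdemSemifieldStr S)

/-- The lattice order: `a ≤ b` iff `a + b = b`. -/
def le (a b : S) : Prop := A.add a b = b

/-- The norm `|a| = a + a⁻¹`. -/
def abs (a : S) : S := A.add a a⁻¹

/-- A kernel: a convex multiplicative subgroup. -/
def IsKernel (K : Set S) : Prop :=
  (1 : S) ∈ K ∧ (∀ a ∈ K, ∀ b ∈ K, a * b ∈ K) ∧ (∀ a ∈ K, a⁻¹ ∈ K) ∧
  (∀ a ∈ K, ∀ b ∈ K, ∀ α β : S, A.add α β = 1 → A.add (α * a) (β * b) ∈ K)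

/-- The kernel generated by a set: the intersection of all kernels containing it. -/
def kgen (T : Set S) : Set S := ⋂₀ {K : Set S | A.IsKernel K ∧ T ⊆ K}

end IdemSemifieldStr

namespace IdemSemifieldStr

variable {S : Type*} [CommGroup S] (A : IdemSemifieldStr S)

lemma le_rfl' (a : S) : A.le a a := A.add_idem a

lemma le_trans' {a b c : S} (h1 : A.le a b) (h2 : A.le b c) : A.le a c := by
  unfold le at *
  rw [← h2, ← A.add_assoc, h1]

lemma le_antisymm' {a b : S} (h1 : A.le a b) (h2 : A.le b a) : a = b := by
  unfold le at *
  rw [← h1, A.add_comm]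
  exact h2.symm

lemma le_add_left' (a b : S) : A.le a (A.add a b) := by
  unfold le
  rw [← A.add_assoc, A.add_idem]

lemma le_add_right' (a b : S) : A.le b (A.add a b) := by
  rw [A.add_comm]
  exact A.le_add_left' b a

lemma add_le' {a b c : S} (h1 : A.le a c) (h2 : A.le b c) : A.le (A.add a b) c := by
  unfold le at *
  rw [A.add_assoc, h2, h1]

lemma mul_le_left {a b : S} (g : S) (h : A.le a b) : A.le (g * a) (g * b) := by
  unfold le at *
  rw [← A.mul_dist, h]

lemma mul_le' {a b c d : S} (h1 : A.le a b) (h2 : A.le c d) : A.le (a * c) (b * d) := by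
  have t1 := A.mul_le_left c h1
  have t2 := A.mul_le_left b h2
  rw [mul_comm c a, mul_comm c b] at t1
  exact A.le_trans' t1 t2

lemma pow_le' {a b : S} (h : A.le a b) (k : ℕ) : A.le (a ^ k) (b ^ k) := by
  induction k with
  | zero => simpa using A.le_rfl' 1
  | succ k ih => rw [pow_succ, pow_succ]; exact A.mul_le' ih h

lemma inv_le_inv' {a b : S} (h : A.le a b) : A.le b⁻¹ a⁻¹ := by
  have key : (a⁻¹ * b⁻¹) * (A.add b a) = A.add a⁻¹ b⁻¹ := by
    rw [A.mul_dist]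
    congr 1 <;> simp [mul_comm, mul_assoc, mul_left_comm]
  rw [A.add_comm b a] at key
  have h' : A.add a b = b := h
  rw [h'] at key
  show A.add b⁻¹ a⁻¹ = a⁻¹
  rw [A.add_comm, ← key]
  simp [mul_comm, mul_assoc, mul_left_comm]

lemma join_one {P Q R : S} (hP : A.le P 1) (hQ : A.le Q 1) (hR : A.le R 1)
    (h1 : A.add P Q = 1) (h2 : A.add P R = 1) : A.add P (Q * R) = 1 := by
  have hQR : A.le (Q * R) 1 := by
    have := A.mul_le' hQ hR
    rwa [one_mul] at this
  have hub : A.le (A.add P (Q * R)) 1 := A.add_le' hP hQR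
  have hlb : A.le 1 (A.add P (Q * R)) := by
    have e : (1 : S) = (A.add P Q) * (A.add P R) := by rw [h1, h2, one_mul]
    rw [e]
    have expand : (A.add P Q) * (A.add P R)
        = A.add (A.add (P * P) (P * R)) (A.add (Q * P) (Q * R)) := by
      rw [mul_comm, A.mul_dist, mul_comm (A.add P R) P, mul_comm (A.add P R) Q,
          A.mul_dist P P R, A.mul_dist Q P R]
    rw [expand]
    have hP' : A.le P (A.add P (Q * R)) := A.le_add_left' _ _
    have hQR' : A.le (Q * R) (A.add P (Q * R)) := A.le_add_right' _ _
    have t1 : A.le (P * P) (A.add P (Q * R)) := by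
      have := A.mul_le' (A.le_rfl' P) hP
      rw [mul_one] at this
      exact A.le_trans' this hP'
    have t2 : A.le (P * R) (A.add P (Q * R)) := by
      have := A.mul_le' (A.le_rfl' P) hR
      rw [mul_one] at this
      exact A.le_trans' this hP'
    have t3 : A.le (Q * P) (A.add P (Q * R)) := by
      have := A.mul_le' hQ (A.le_rfl' P)
      rw [one_mul] at this
      exact A.le_trans' this hP'
    exact A.add_le' (A.add_le' t1 t2) (A.add_le' t3 hQR')
  exact (A.le_antisymm' hlb hub).symm

lemma add_pow_one {P Q : S} (hP : A.le P 1) (hQ : A.le Q 1) (h : A.add P Q = 1) (k : ℕ) :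
    A.add P (Q ^ k) = 1 := by
  induction k with
  | zero => rw [pow_zero]; exact hP
  | succ k ih =>
    have hQk : A.le (Q ^ k) 1 := by
      have := A.pow_le' hQ k
      rwa [one_pow] at this
    rw [pow_succ]
    exact A.join_one hP hQk hQ ih h

lemma pow_add_pow_one {P Q : S} (hP : A.le P 1) (hQ : A.le Q 1) (h : A.add P Q = 1)
    (k l : ℕ) : A.add (P ^ k) (Q ^ l) = 1 := by
  have hPk : A.le (P ^ k) 1 := by
    have := A.pow_le' hP k
    rwa [one_pow] at this
  have h1 : A.add Q (P ^ k) = 1 := by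
    apply A.add_pow_one hQ hP
    rw [A.add_comm]; exact h
  apply A.add_pow_one hPk hQ
  rw [A.add_comm]; exact h1

/-- Torsion-freeness of the order: if `1 ≤ xⁿ` (`n ≥ 1`) then `1 ≤ x`. -/
lemma one_le_of_pow {x : S} {n : ℕ} (hn : 1 ≤ n) (h : A.le 1 (x ^ n)) : A.le 1 x := by
  have hx_eq : x * A.add x⁻¹ 1 = A.add x 1 := by
    rw [A.mul_dist, mul_inv_cancel, mul_one, A.add_comm]
  have h1p : A.le 1 (A.add x 1) := A.le_add_right' x 1
  have h1m : A.le 1 (A.add x⁻¹ 1) := A.le_add_right' x⁻¹ 1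
  have hw : (A.add x 1) * (A.add x⁻¹ 1) = A.add (A.add x 1) (A.add x⁻¹ 1) := by
    rw [mul_comm, A.mul_dist, mul_one, mul_comm (A.add x⁻¹ 1) x, hx_eq]
  have hmeet : A.add (A.add x 1)⁻¹ (A.add x⁻¹ 1)⁻¹ = 1 := by
    have e : A.add (A.add x 1)⁻¹ (A.add x⁻¹ 1)⁻¹
        = ((A.add x 1) * (A.add x⁻¹ 1))⁻¹ * (A.add (A.add x⁻¹ 1) (A.add x 1)) := by
      rw [A.mul_dist]
      congr 1 <;> simp [mul_comm, mul_assoc, mul_left_comm]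
    rw [e, A.add_comm (A.add x⁻¹ 1), ← hw, inv_mul_cancel]
  have hPle : A.le (A.add x 1)⁻¹ 1 := by
    have := A.inv_le_inv' h1p
    rwa [inv_one] at this
  have hQle : A.le (A.add x⁻¹ 1)⁻¹ 1 := by
    have := A.inv_le_inv' h1m
    rwa [inv_one] at this
  have hcp : A.add ((A.add x 1)⁻¹ ^ n) ((A.add x⁻¹ 1)⁻¹ ^ n) = 1 :=
    A.pow_add_pow_one hPle hQle hmeet n n
  have hpow : A.le ((A.add x⁻¹ 1) ^ n) ((A.add x 1) ^ n) := by
    have h2 := A.mul_le_left ((A.add x⁻¹ 1) ^ n) h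
    rw [mul_one, mul_comm ((A.add x⁻¹ 1) ^ n) (x ^ n), ← mul_pow, hx_eq] at h2
    exact h2
  have hinvle : A.le ((A.add x 1)⁻¹ ^ n) ((A.add x⁻¹ 1)⁻¹ ^ n) := by
    have := A.inv_le_inv' hpow
    rwa [← inv_pow, ← inv_pow] at this
  have hQn1 : (A.add x⁻¹ 1)⁻¹ ^ n = 1 := by
    have h' : A.add ((A.add x 1)⁻¹ ^ n) ((A.add x⁻¹ 1)⁻¹ ^ n)
        = (A.add x⁻¹ 1)⁻¹ ^ n := hinvle
    rw [← h']
    exact hcp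
  have hxmn : (A.add x⁻¹ 1) ^ n = 1 := by
    have : ((A.add x⁻¹ 1) ^ n)⁻¹ = 1 := by rw [← inv_pow]; exact hQn1
    rw [← inv_inv ((A.add x⁻¹ 1) ^ n), this, inv_one]
  have hle_pow : A.le (A.add x⁻¹ 1) ((A.add x⁻¹ 1) ^ n) := by
    obtain ⟨m, rfl⟩ : ∃ m, n = m + 1 := ⟨n - 1, by omega⟩
    have h1 : A.le 1 ((A.add x⁻¹ 1) ^ m) := by
      have := A.pow_le' h1m m
      rwa [one_pow] at this
    have := A.mul_le_left (A.add x⁻¹ 1) h1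
    rwa [mul_one, ← pow_succ'] at this
  rw [hxmn] at hle_pow
  have hxm1 : A.add x⁻¹ 1 = 1 := A.le_antisymm' hle_pow h1m
  have hx1 : A.add x 1 = x := by
    rw [← hx_eq, hxm1, mul_one]
  rwa [hx1] at h1p

/-- `1 ≤ x^p + x⁻¹^q` whenever `p + q ≥ 1`. -/
lemma one_le_add_pow (x : S) (p q : ℕ) (hpq : 1 ≤ p + q) :
    A.le 1 (A.add (x ^ p) (x⁻¹ ^ q)) := by
  have h1 : A.le (x ^ p) (A.add (x ^ p) (x⁻¹ ^ q)) := A.le_add_left' _ _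
  have h2 : A.le (x⁻¹ ^ q) (A.add (x ^ p) (x⁻¹ ^ q)) := A.le_add_right' _ _
  have h3 := A.mul_le' (A.pow_le' h1 q) (A.pow_le' h2 p)
  have e : (x ^ p) ^ q * ((x⁻¹ ^ q) ^ p) = 1 := by
    rw [← pow_mul, ← pow_mul, inv_pow, Nat.mul_comm q p, mul_inv_cancel]
  rw [e, ← pow_add] at h3
  rw [Nat.add_comm q p] at h3
  exact A.one_le_of_pow hpq h3

/-- Convexity: if `k ∈ K` and `1 ≤ x ≤ k` then `x ∈ K`. -/
lemma mem_of_between {K : Set S} (hK : A.IsKernel K) {x k : S} (hk : k ∈ K)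
    (h1 : A.le 1 x) (h2 : A.le x k) : x ∈ K := by
  obtain ⟨h1K, -, -, hconv⟩ := hK
  have hα : A.add (x * k⁻¹) 1 = 1 := by
    have := A.mul_le_left k⁻¹ h2
    rwa [inv_mul_cancel, mul_comm k⁻¹ x] at this
  have hmem := hconv k hk 1 h1K (x * k⁻¹) 1 hα
  rwa [one_mul, mul_assoc, inv_mul_cancel, mul_one, A.add_comm,
       show A.add 1 x = x from h1] at hmem
/-- Convexity: if `k ∈ K` and `k⁻¹ ≤ x ≤ k` then `x ∈ K`. -/
lemma mem_of_between' {K : Set S} (hK : A.IsKernel K) {x k : S} (hk : k ∈ K)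
    (h1 : A.le k⁻¹ x) (h2 : A.le x k) : x ∈ K := by
  obtain ⟨-, -, hinv, hconv⟩ := hK
  have hα : A.add (x * k⁻¹) 1 = 1 := by
    have := A.mul_le_left k⁻¹ h2
    rwa [inv_mul_cancel, mul_comm k⁻¹ x] at this
  have hmem := hconv k hk k⁻¹ (hinv k hk) (x * k⁻¹) 1 hα
  rwa [one_mul, mul_assoc, inv_mul_cancel, mul_one, A.add_comm,
       show A.add k⁻¹ x = x from h1] at hmem

end IdemSemifieldStr

/-- If aⁿ ∈ K for some n ≥ 1, then a ∈ K, for any kernel K of an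
idempotent semifield. -/
theorem pow_mem_kernel {S : Type*} [CommGroup S] (A : IdemSemifieldStr S)
    (K : Set S) (hK : A.IsKernel K) (a : S) (n : ℕ) (hn : 1 ≤ n)
    (h : a ^ n ∈ K) : a ∈ K := by
  obtain ⟨m, rfl⟩ : ∃ m, n = m + 1 := ⟨n - 1, by omega⟩
  have hinv := hK.2.2.1
  have hconv := hK.2.2.2
  -- z = |aⁿ| = aⁿ + a⁻ⁿ belongs to K (convex combination with α = β = 1)
  have hz : A.add (a ^ (m + 1)) ((a ^ (m + 1))⁻¹) ∈ K := by
    have := hconv (a ^ (m + 1)) h ((a ^ (m + 1))⁻¹) (hinv _ h) 1 1 (A.add_idem 1)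
    simpa using this
  -- a ≤ z
  have h5 : A.le 1 (A.add (a ^ m) (a⁻¹ ^ (m + 2))) := A.one_le_add_pow a m (m + 2) (by omega)
  have h6 := A.mul_le_left a h5
  have e1 : a * a ^ m = a ^ (m + 1) := (pow_succ' a m).symm
  have e2 : a * a⁻¹ ^ (m + 2) = (a ^ (m + 1))⁻¹ := by
    rw [pow_succ', ← mul_assoc, mul_inv_cancel, one_mul, inv_pow]
  rw [mul_one, A.mul_dist, e1, e2] at h6
  -- a⁻¹ ≤ z
  have h7 : A.le 1 (A.add (a ^ (m + 2)) (a⁻¹ ^ m)) := A.one_le_add_pow a (m + 2) m (by omega)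
  have h8 := A.mul_le_left a⁻¹ h7
  have e3 : a⁻¹ * a ^ (m + 2) = a ^ (m + 1) := by
    rw [pow_succ', ← mul_assoc, inv_mul_cancel, one_mul]
  have e4 : a⁻¹ * a⁻¹ ^ m = (a ^ (m + 1))⁻¹ := by
    rw [← pow_succ', inv_pow]
  rw [mul_one, A.mul_dist, e3, e4] at h8
  -- y = a + a⁻¹ satisfies 1 ≤ y ≤ z, hence y ∈ K
  have hy1 : A.le 1 (A.add a a⁻¹) := by
    have := A.one_le_add_pow a 1 1 (by omega)
    simpa [pow_one] using this
  have hy_le_z : A.le (A.add a a⁻¹) (A.add (a ^ (m + 1)) ((a ^ (m + 1))⁻¹)) :=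
    A.add_le' h6 h8
  have hy_mem : A.add a a⁻¹ ∈ K := A.mem_of_between hK hz hy1 hy_le_z
  -- finally a is between y⁻¹ and y
  have ha_y : A.le a (A.add a a⁻¹) := A.le_add_left' _ _
  have hyinv_a : A.le (A.add a a⁻¹)⁻¹ a := by
    have h9 : A.le 1 (a * A.add a a⁻¹) := by
      rw [A.mul_dist, mul_inv_cancel]
      exact A.le_add_right' _ _
    have := A.mul_le_left (A.add a a⁻¹)⁻¹ h9
    rwa [mul_one, mul_comm a (A.add a a⁻¹), ← mul_assoc, inv_mul_cancel, one_mul] at this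
  exact A.mem_of_between' hK hy_mem hyinv_a ha_y
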